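/- Under the Roth–Erev reinforcement update for the DBMS (with fixed user strategy U), for any query j and result ℓ, the conditional expected one-step change of the strategy entry satisfies E[D⁺_{jℓ} | F_t] − D_{jℓ} = D_{jℓ} · Σ_i π_i U_{ij} ( r_{iℓ}/(R̄_j + r_{iℓ}) − Σ_{ℓ'} D_{jℓ'} · r_{iℓ'}/(R̄_j + r_{iℓ'}) ), where R̄_j = Σ_{ℓ'} R_{jℓ'}. -/

import Mathlib

open Finset

def RowStochastic {a b : ℕ} (M : Matrix (Fin a) (Fin b) ℝ) : Prop :=
  (∀ i j, 0 ≤ M i j) ∧ ∀ i, ∑ j, M i j = 1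

/-- One-step conditional drift of the DBMS strategy under Roth–Erev reinforcement
with a fixed user strategy `U`. The conditional expectation given the history is
computed by averaging over the one-step randomness: nature picks intent `i0` with
probability `π i0`, the user picks query `j0` with probability `U i0 j0`, the DBMS
picks result `l0` with probability `D j0 l0`, and then `R` is reinforced at
`(j0, l0)` by `r i0 l0`. -/
theorem dbms_reinforcement_drift {m n o : ℕ}
    (π : Fin m → ℝ) (U : Matrix (Fin m) (Fin n) ℝ)
    (r : Fin m → Fin o → ℝ) (R : Matrix (Fin n) (Fin o) ℝ)
    (hπ : (∀ i, 0 ≤ π i) ∧ ∑ i, π i = 1) (hU : RowStochastic U)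
    (hr : ∀ i l, 0 ≤ r i l) (hR : ∀ j l, 0 < R j l)
    (D : Matrix (Fin n) (Fin o) ℝ)
    (hD : ∀ j l, D j l = R j l / ∑ l', R j l')
    (Rplus : Fin m → Fin n → Fin o → Matrix (Fin n) (Fin o) ℝ)
    (hRplus : ∀ i0 j0 l0 j l,
      Rplus i0 j0 l0 j l = R j l + if j = j0 ∧ l = l0 then r i0 l0 else 0)
    (Dplus : Fin m → Fin n → Fin o → Matrix (Fin n) (Fin o) ℝ)
    (hDplus : ∀ i0 j0 l0 j l,
      Dplus i0 j0 l0 j l = Rplus i0 j0 l0 j l / ∑ l', Rplus i0 j0 l0 j l')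
    (j : Fin n) (l : Fin o) :
    (∑ i0, ∑ j0, ∑ l0, π i0 * U i0 j0 * D j0 l0 * Dplus i0 j0 l0 j l) - D j l =
      D j l * ∑ i, π i * U i j *
        (r i l / ((∑ l', R j l') + r i l) -
          ∑ l', D j l' * (r i l' / ((∑ l'', R j l'') + r i l'))) := by
  obtain ⟨hπ0, hπ1⟩ := hπ
  obtain ⟨hU0, hU1⟩ := hU
  set S : ℝ := ∑ l', R j l' with hS
  have hSpos : 0 < S := Finset.sum_pos (fun l' _ => hR j l') ⟨l, Finset.mem_univ l⟩
  have hden : ∀ i0 (l0 : Fin o), 0 < S + r i0 l0 := fun i0 l0 => by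
    have := hr i0 l0; linarith
  have hrow : ∀ j0 : Fin n, ∑ l0, D j0 l0 = 1 := by
    intro j0
    have hp : (0:ℝ) < ∑ l', R j0 l' :=
      Finset.sum_pos (fun l' _ => hR j0 l') ⟨l, Finset.mem_univ l⟩
    simp only [hD]
    rw [← Finset.sum_div, div_self hp.ne']
  have hRD : ∀ l' : Fin o, R j l' = D j l' * S := by
    intro l'; rw [hD, ← hS]; field_simp
  have hsum : ∀ i0 j0 l0, ∑ l', Rplus i0 j0 l0 j l' =
      S + if j = j0 then r i0 l0 else 0 := by
    intro i0 j0 l0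
    simp only [hRplus, Finset.sum_add_distrib]
    congr 1
    by_cases h : j = j0
    · simp [h]
    · simp [h]
  have hDP : ∀ i0 j0 l0, Dplus i0 j0 l0 j l =
      if j = j0 then (R j l + if l = l0 then r i0 l0 else 0) / (S + r i0 l0)
      else D j l := by
    intro i0 j0 l0
    rw [hDplus, hsum, hRplus]
    by_cases h : j = j0
    · simp [h]
    · simp [h, hD j l, hS]
  -- the per-intent "reinforced row" average
  set A : Fin m → ℝ := fun i0 =>
    ∑ l0, D j l0 * ((R j l + if l = l0 then r i0 l0 else 0) / (S + r i0 l0)) with hA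
  set T : Fin m → ℝ := fun i0 => ∑ l0, D j l0 * (r i0 l0 / (S + r i0 l0)) with hT
  have hinner : ∀ i0 j0, ∑ l0, D j0 l0 * Dplus i0 j0 l0 j l =
      if j = j0 then A i0 else D j l := by
    intro i0 j0
    by_cases h : j = j0
    · subst h
      simp only [hA, if_pos rfl]
      refine Finset.sum_congr rfl fun l0 _ => ?_
      rw [hDP i0 j l0, if_pos rfl]
    · simp only [if_neg h]
      calc ∑ l0, D j0 l0 * Dplus i0 j0 l0 j l = ∑ l0, D j0 l0 * D j l := by
            refine Finset.sum_congr rfl fun l0 _ => ?_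
            rw [hDP i0 j0 l0, if_neg h]
        _ = D j l := by rw [← Finset.sum_mul, hrow, one_mul]
  have hAkey : ∀ i0, A i0 - D j l =
      D j l * (r i0 l / (S + r i0 l) - T i0) := by
    intro i0
    have h1 : A i0 = (∑ l0, D j l0 * (R j l / (S + r i0 l0)))
        + D j l * (r i0 l / (S + r i0 l)) := by
      simp only [hA]
      rw [show (∑ l0, D j l0 * ((R j l + if l = l0 then r i0 l0 else 0) / (S + r i0 l0)))
          = ∑ l0, (D j l0 * (R j l / (S + r i0 l0)) +
              if l = l0 then D j l0 * (r i0 l0 / (S + r i0 l0)) else 0) from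
        Finset.sum_congr rfl fun l0 _ => by
          by_cases h : l = l0 <;> simp [h, add_div, mul_add]]
      rw [Finset.sum_add_distrib, Finset.sum_ite_eq Finset.univ l
        (fun l0 => D j l0 * (r i0 l0 / (S + r i0 l0)))]
      simp
    have h2 : (∑ l0, D j l0 * (R j l / (S + r i0 l0)))
        = D j l * (1 - T i0) := by
      have : ∀ l0 : Fin o, D j l0 * (R j l / (S + r i0 l0))
          = D j l * (D j l0 - D j l0 * (r i0 l0 / (S + r i0 l0))) := by
        intro l0
        rw [hRD l]
        have hne := (hden i0 l0).ne'
        field_simp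
        ring
      rw [Finset.sum_congr rfl fun l0 _ => this l0, ← Finset.mul_sum,
        Finset.sum_sub_distrib, hrow, hT]
    rw [h1, h2]; ring
  -- assemble
  have houter : ∀ i0, ∑ j0, ∑ l0, π i0 * U i0 j0 * D j0 l0 * Dplus i0 j0 l0 j l
      = π i0 * (D j l + U i0 j * (A i0 - D j l)) := by
    intro i0
    have : ∀ j0, ∑ l0, π i0 * U i0 j0 * D j0 l0 * Dplus i0 j0 l0 j l
        = π i0 * (U i0 j0 * (if j = j0 then A i0 else D j l)) := by
      intro j0
      rw [show (∑ l0, π i0 * U i0 j0 * D j0 l0 * Dplus i0 j0 l0 j l)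
          = π i0 * U i0 j0 * ∑ l0, D j0 l0 * Dplus i0 j0 l0 j l from by
        rw [Finset.mul_sum]; exact Finset.sum_congr rfl fun l0 _ => by ring]
      rw [hinner i0 j0]; ring
    rw [Finset.sum_congr rfl fun j0 _ => this j0, ← Finset.mul_sum]
    congr 1
    rw [show (∑ j0, U i0 j0 * (if j = j0 then A i0 else D j l))
        = ∑ j0, (U i0 j0 * D j l + if j = j0 then U i0 j0 * (A i0 - D j l) else 0) from
      Finset.sum_congr rfl fun j0 _ => by by_cases h : j = j0 <;> simp [h] <;> ring]
    rw [Finset.sum_add_distrib, ← Finset.sum_mul, hU1,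
      Finset.sum_ite_eq Finset.univ j (fun j0 => U i0 j0 * (A i0 - D j l))]
    simp
  rw [Finset.sum_congr rfl fun i0 _ => houter i0]
  rw [show (∑ i0, π i0 * (D j l + U i0 j * (A i0 - D j l)))
      = (∑ i0, π i0) * D j l + ∑ i0, π i0 * U i0 j * (A i0 - D j l) from by
    rw [Finset.sum_mul, ← Finset.sum_add_distrib]
    exact Finset.sum_congr rfl fun i0 _ => by ring]
  rw [hπ1, one_mul, add_sub_cancel_left, Finset.mul_sum]
  refine Finset.sum_congr rfl fun i0 _ => ?_
  rw [hAkey i0]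
  simp only [hT, ← hS]
  ring
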